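/- Symplectic eigenvalues of the partially transposed beamsplitter state: let r₁, r₂ ∈ ℝ, let Σ_B = B₄ Σ_in B₄ᵀ be the covariance matrix of the state obtained by interfering two phase-squeezed vacua of parameters r₁, r₂ on a balanced beamsplitter, let Λ = diag(1,1,1,−1) be the partial-transposition reflection, Σ̃ = Λ Σ_B Λ, and Ω = [[0, I₂],[−I₂, 0]]. Then the characteristic polynomial of Σ̃·Ω is det(X·I₄ − Σ̃Ω) = (X² + (1/4)e^{2(r₁−r₂)})·(X² + (1/4)e^{−2(r₁−r₂)}); hence the symplectic eigenvalues of Σ̃ are (1/2)e^{±(r₁−r₂)}. -/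

import Mathlib

open Matrix Polynomial

/-- Covariance matrix of two independent phase-squeezed vacua of parameters `r₁, r₂`,
in the quadrature ordering `(Q₁,Q₂,P₁,P₂)`:
`Σ_in = (1/2)·diag(e^{2r₁}, e^{2r₂}, e^{−2r₁}, e^{−2r₂})`. -/
noncomputable def sigmaIn (r₁ r₂ : ℝ) : Matrix (Fin 4) (Fin 4) ℝ :=
  (1 / 2 : ℝ) • Matrix.diagonal
    ![Real.exp (2 * r₁), Real.exp (2 * r₂), Real.exp (-(2 * r₁)), Real.exp (-(2 * r₂))]

/-- The balanced beamsplitter `B₄ = diag-block(B,B)` with `B = (1/√2)[[1,1],[−1,1]]`. -/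
noncomputable def bs4 : Matrix (Fin 4) (Fin 4) ℝ :=
  (Real.sqrt 2)⁻¹ • !![1, 1, 0, 0; -1, 1, 0, 0; 0, 0, 1, 1; 0, 0, -1, 1]

/-- Partial-transposition reflection `Λ = diag(1,1,1,−1)`. -/
def lamPT : Matrix (Fin 4) (Fin 4) ℝ := Matrix.diagonal ![1, 1, 1, -1]

/-- The symplectic form `Ω = [[0, I₂],[−I₂, 0]]`. -/
def omega4 : Matrix (Fin 4) (Fin 4) ℝ :=
  !![0, 0, 1, 0; 0, 0, 0, 1; -1, 0, 0, 0; 0, -1, 0, 0]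

lemma smul_reduce (D : Matrix (Fin 4) (Fin 4) ℝ) :
    ((Real.sqrt 2)⁻¹ • !![1, 1, 0, 0; -1, 1, 0, 0; 0, 0, 1, 1; 0, 0, -1, 1]) *
      ((1 / 2 : ℝ) • D) *
      ((Real.sqrt 2)⁻¹ • (!![1, 1, 0, 0; -1, 1, 0, 0; 0, 0, 1, 1; 0, 0, -1, 1] : Matrix (Fin 4) (Fin 4) ℝ))ᵀ
    = (4:ℝ)⁻¹ • (!![1, 1, 0, 0; -1, 1, 0, 0; 0, 0, 1, 1; 0, 0, -1, 1] * D *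
        (!![1, 1, 0, 0; -1, 1, 0, 0; 0, 0, 1, 1; 0, 0, -1, 1] : Matrix (Fin 4) (Fin 4) ℝ)ᵀ) := by
  have h2 : (Real.sqrt 2)⁻¹ * (Real.sqrt 2)⁻¹ * (1/2:ℝ) = (4:ℝ)⁻¹ := by
    have h : Real.sqrt 2 * Real.sqrt 2 = 2 := Real.mul_self_sqrt (by norm_num)
    field_simp
    nlinarith [h]
  rw [Matrix.transpose_smul, Matrix.smul_mul, Matrix.smul_mul, Matrix.mul_smul,
    Matrix.mul_smul, smul_smul, Matrix.smul_mul, smul_smul, mul_one_div,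
    div_eq_mul_inv, mul_comm ((Real.sqrt 2)⁻¹ * (Real.sqrt 2)⁻¹)]
  rw [show ((2:ℝ)⁻¹ * ((Real.sqrt 2)⁻¹ * (Real.sqrt 2)⁻¹)) = (4:ℝ)⁻¹ by
    rw [mul_comm]; rw [← h2]; ring]

set_option maxHeartbeats 1000000 in
lemma core (a b c d : ℝ) :
    (Matrix.diagonal ![1,1,1,-1] : Matrix (Fin 4) (Fin 4) ℝ) *
      ((4:ℝ)⁻¹ • (!![1, 1, 0, 0; -1, 1, 0, 0; 0, 0, 1, 1; 0, 0, -1, 1] *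
        Matrix.diagonal ![a,b,c,d] *
        (!![1, 1, 0, 0; -1, 1, 0, 0; 0, 0, 1, 1; 0, 0, -1, 1] : Matrix (Fin 4) (Fin 4) ℝ)ᵀ)) *
      Matrix.diagonal ![1,1,1,-1] *
      !![0, 0, 1, 0; 0, 0, 0, 1; -1, 0, 0, 0; 0, -1, 0, 0]
    = !![0, 0, (a+b)*(4:ℝ)⁻¹, (b-a)*(4:ℝ)⁻¹;
         0, 0, (b-a)*(4:ℝ)⁻¹, (a+b)*(4:ℝ)⁻¹;
         (-(c+d))*(4:ℝ)⁻¹, (d-c)*(4:ℝ)⁻¹, 0, 0;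
         (d-c)*(4:ℝ)⁻¹, (-(c+d))*(4:ℝ)⁻¹, 0, 0] := by
  have hd : (Matrix.diagonal ![a,b,c,d] : Matrix (Fin 4) (Fin 4) ℝ)
      = !![a,0,0,0; 0,b,0,0; 0,0,c,0; 0,0,0,d] := by
    ext i j; fin_cases i <;> fin_cases j <;> simp [Matrix.diagonal_apply, Matrix.vecHead, Matrix.vecTail]
  have hl : (Matrix.diagonal ![1,1,1,-1] : Matrix (Fin 4) (Fin 4) ℝ)
      = !![1,0,0,0; 0,1,0,0; 0,0,1,0; 0,0,0,-1] := by
    ext i j; fin_cases i <;> fin_cases j <;> simp [Matrix.diagonal_apply, Matrix.vecHead, Matrix.vecTail]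
  rw [hd, hl]
  ext i j
  fin_cases i <;> fin_cases j <;>
    simp [Matrix.mul_apply, Fin.sum_univ_four, Matrix.vecHead, Matrix.vecTail,
      Matrix.transpose_apply, Matrix.cons_val_zero, Matrix.cons_val_one, Pi.smul_apply,
      Matrix.smul_apply, smul_eq_mul, Matrix.cons_val_fin_one, Matrix.cons_val',
      Matrix.vecMul, dotProduct] <;> ring

set_option maxHeartbeats 1000000 in
lemma cp (a b c d : ℝ) :
    (!![0, 0, (a+b)*(4:ℝ)⁻¹, (b-a)*(4:ℝ)⁻¹;
        0, 0, (b-a)*(4:ℝ)⁻¹, (a+b)*(4:ℝ)⁻¹;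
        (-(c+d))*(4:ℝ)⁻¹, (d-c)*(4:ℝ)⁻¹, 0, 0;
        (d-c)*(4:ℝ)⁻¹, (-(c+d))*(4:ℝ)⁻¹, 0, 0] : Matrix (Fin 4) (Fin 4) ℝ).charpoly
    = (X ^ 2 + C ((a*d) * (4:ℝ)⁻¹)) * (X ^ 2 + C ((b*c) * (4:ℝ)⁻¹)) := by
  rw [Matrix.charpoly]
  have hc : (!![0, 0, (a+b)*(4:ℝ)⁻¹, (b-a)*(4:ℝ)⁻¹;
        0, 0, (b-a)*(4:ℝ)⁻¹, (a+b)*(4:ℝ)⁻¹;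
        (-(c+d))*(4:ℝ)⁻¹, (d-c)*(4:ℝ)⁻¹, 0, 0;
        (d-c)*(4:ℝ)⁻¹, (-(c+d))*(4:ℝ)⁻¹, 0, 0] : Matrix (Fin 4) (Fin 4) ℝ).charmatrix
      = !![X, 0, -C ((a+b)*(4:ℝ)⁻¹), -C ((b-a)*(4:ℝ)⁻¹);
           0, X, -C ((b-a)*(4:ℝ)⁻¹), -C ((a+b)*(4:ℝ)⁻¹);
           -C ((-(c+d))*(4:ℝ)⁻¹), -C ((d-c)*(4:ℝ)⁻¹), X, 0;
           -C ((d-c)*(4:ℝ)⁻¹), -C ((-(c+d))*(4:ℝ)⁻¹), 0, X] := by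
    ext i j
    fin_cases i <;> fin_cases j <;>
      simp [Matrix.charmatrix_apply, Matrix.one_apply, Matrix.vecHead, Matrix.vecTail]
  rw [hc]
  simp [Matrix.det_succ_row_zero, Fin.sum_univ_succ, _root_.map_mul, _root_.map_add,
    map_sub, map_neg]
  simp [Fin.succAbove, Fin.lt_def]
  have h4 : (4 : Polynomial ℝ) * C ((4:ℝ)⁻¹) = 1 := by
    rw [show (4 : Polynomial ℝ) = C (4:ℝ) from (map_ofNat C 4).symm, ← _root_.map_mul]
    norm_num
  linear_combination (C b * C c * X^2 * C ((4:ℝ)⁻¹) + C a * C d * X^2 * C ((4:ℝ)⁻¹) +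
    C b * C a * C d * C c * C ((4:ℝ)⁻¹)^2 * (4 * C ((4:ℝ)⁻¹) + 1)) * h4

/-- with `Σ_B = B₄ Σ_in B₄ᵀ` and `Σ̃ = Λ Σ_B Λ`, the characteristic
polynomial of `Σ̃·Ω`, i.e. `det(X·I₄ − Σ̃Ω)`, equals
`(X² + (1/4)e^{2(r₁−r₂)})·(X² + (1/4)e^{−2(r₁−r₂)})`; hence the symplectic eigenvalues of
`Σ̃` are `(1/2)e^{±(r₁−r₂)}`. -/
theorem charpoly_partial_transpose_beamsplitter (r₁ r₂ : ℝ) :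
    ((lamPT * (bs4 * sigmaIn r₁ r₂ * bs4ᵀ) * lamPT) * omega4).charpoly
      = (X ^ 2 + C (Real.exp (2 * (r₁ - r₂)) / 4)) *
        (X ^ 2 + C (Real.exp (-(2 * (r₁ - r₂))) / 4)) := by
  rw [lamPT, omega4, bs4, sigmaIn, smul_reduce, core, cp]
  have h1 : Real.exp (2 * r₁) * Real.exp (-(2 * r₂)) = Real.exp (2 * (r₁ - r₂)) := by
    rw [← Real.exp_add]; ring_nf
  have h2 : Real.exp (2 * r₂) * Real.exp (-(2 * r₁)) = Real.exp (-(2 * (r₁ - r₂))) := by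
    rw [← Real.exp_add]; ring_nf
  rw [h1, h2, mul_comm _ ((4:ℝ)⁻¹), mul_comm _ ((4:ℝ)⁻¹), inv_mul_eq_div, inv_mul_eq_div]
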